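/- With the setup of the lumping reduction: define reduced matrices A'_i = A_i for i = 1,...,n_p−1 and A'_{n_p} = (1/β)(Σ_{i=n_p}^{n̂_p−1} exp(b_i) A_i + A_{n̂_p}), where β = 1 + Σ_{i=n_p}^{n̂_p−1} exp(b_i). Let p ∈ ℝ^{n̂_p} be the full softmax probabilities (logits N̄_1,...,N̄_{n_p−1}, b_{n_p},...,b_{n̂_p−1}, 0) and p' ∈ ℝ^{n_p} the reduced softmax probabilities (logits N̄_i − log β, i = 1,...,n_p−1, and 0). Then Σ_{i=1}^{n̂_p} p_i A_i = Σ_{i=1}^{n_p} p'_i A'_i. -/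

import Mathlib

/-- Proposition 5, lumping reduction: the full softmax combination of
the matrices A_i equals the reduced softmax combination of the lumped matrices.
Categories are 0-indexed: logits Nbar i for i < np-1, b i for np-1 ≤ i < nhp-1,
and 0 for the last category nhp-1. -/
theorem softmax_model_reduction_lumping
    {M : Type*} [AddCommGroup M] [Module ℝ M]
    (np nhp : ℕ) (hnp : 1 ≤ np) (hle : np ≤ nhp)
    (Nbar : ℕ → ℝ) (b : ℕ → ℝ) (A : ℕ → M)
    (β D D' : ℝ)
    (hβ : β = 1 + ∑ i ∈ Finset.Ico (np - 1) (nhp - 1), Real.exp (b i))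
    (hD : D = 1 + (∑ i ∈ Finset.range (np - 1), Real.exp (Nbar i))
        + ∑ i ∈ Finset.Ico (np - 1) (nhp - 1), Real.exp (b i))
    (hD' : D' = 1 + ∑ i ∈ Finset.range (np - 1),
        Real.exp (Nbar i - Real.log β)) :
    (∑ i ∈ Finset.range (np - 1), (Real.exp (Nbar i) / D) • A i)
      + (∑ i ∈ Finset.Ico (np - 1) (nhp - 1), (Real.exp (b i) / D) • A i)
      + (1 / D) • A (nhp - 1)
    = (∑ i ∈ Finset.range (np - 1),
        (Real.exp (Nbar i - Real.log β) / D') • A i)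
      + (1 / D') • ((1 / β) •
          ((∑ i ∈ Finset.Ico (np - 1) (nhp - 1), Real.exp (b i) • A i)
            + A (nhp - 1))) := by
  have hβpos : 0 < β := by
    rw [hβ]
    have : 0 ≤ ∑ i ∈ Finset.Ico (np - 1) (nhp - 1), Real.exp (b i) :=
      Finset.sum_nonneg fun i _ => (Real.exp_pos _).le
    linarith
  have hDpos : 0 < D := by
    rw [hD]
    have h1 : 0 ≤ ∑ i ∈ Finset.range (np - 1), Real.exp (Nbar i) :=
      Finset.sum_nonneg fun i _ => (Real.exp_pos _).le
    have h2 : 0 ≤ ∑ i ∈ Finset.Ico (np - 1) (nhp - 1), Real.exp (b i) :=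
      Finset.sum_nonneg fun i _ => (Real.exp_pos _).le
    linarith
  have hlog : Real.exp (Real.log β) = β := Real.exp_log hβpos
  have hsum : (∑ i ∈ Finset.range (np - 1), Real.exp (Nbar i - Real.log β)) * β
      = ∑ i ∈ Finset.range (np - 1), Real.exp (Nbar i) := by
    rw [Finset.sum_mul]
    refine Finset.sum_congr rfl fun i _ => ?_
    rw [Real.exp_sub, hlog, div_mul_cancel₀ _ hβpos.ne']
  have hDD : D = β * D' := by
    rw [hD', mul_add, mul_one, mul_comm β, hsum, hD, hβ]
    ring
  have hD'ne : D' ≠ 0 := by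
    intro h
    rw [h, mul_zero] at hDD
    exact hDpos.ne' hDD
  have hc1 : ∀ i, Real.exp (Nbar i - Real.log β) / D' = Real.exp (Nbar i) / D := by
    intro i
    rw [Real.exp_sub, hlog, hDD]
    field_simp
  have hc2 : ∀ i, (1 / D') * ((1 / β) * Real.exp (b i)) = Real.exp (b i) / D := by
    intro i
    rw [hDD]
    field_simp
  have hc3 : (1 / D') * (1 / β) = 1 / D := by
    rw [hDD]
    field_simp
  simp only [hc1, smul_add, Finset.smul_sum, smul_smul, hc2, hc3]
  abel
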